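/- Under the hypotheses of the DeC convergence result (L1 coercive with constant γ1, L1 − L2 Lipschitz with constant γ2·Δt, unique zero a* of L2), suppose additionally that ‖a* − a_ex‖ ≤ C·Δt^(M+1) for a reference element a_ex and some constant C. Then after K iterations starting from a⁽⁰⁾ with ‖a⁽⁰⁾ − a*‖ ≤ C, the DeC iterate satisfies ‖a⁽ᴷ⁾ − a_ex‖ ≤ C·(Δt^(M+1) + β^K Δt^K) with β := γ2/γ1; hence the scheme is accurate of order min(M+1, K). -/

import Mathlib

theorem stmt_4 {X : Type*} [NormedAddCommGroup X] [NormedSpace ℝ X]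
    [FiniteDimensional ℝ X]
    (Δt γ1 γ2 C : ℝ) (Mn K : ℕ)
    (hΔt : 0 < Δt) (hγ1 : 0 < γ1) (hγ2 : 0 < γ2) (hC : 0 < C)
    (L1 L2 : X → X)
    (hcoer : ∀ a d : X, γ1 * ‖a - d‖ ≤ ‖L1 a - L1 d‖)
    (hlip : ∀ a d : X, ‖(L1 a - L2 a) - (L1 d - L2 d)‖ ≤ γ2 * Δt * ‖a - d‖)
    (astar aex : X) (hstar : L2 astar = 0)
    (huniq : ∀ b : X, L2 b = 0 → b = astar)
    (hclose : ‖astar - aex‖ ≤ C * Δt ^ (Mn + 1))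
    (a : ℕ → X) (h0 : ‖a 0 - astar‖ ≤ C)
    (hrec : ∀ k : ℕ, L1 (a (k + 1)) = L1 (a k) - L2 (a k)) :
    ‖a K - aex‖ ≤ C * (Δt ^ (Mn + 1) + (γ2 / γ1) ^ K * Δt ^ K) := by
  have key : ∀ k : ℕ, ‖a k - astar‖ ≤ (γ2 * Δt / γ1) ^ k * C := by
    intro k
    induction k with
    | zero => simpa using h0
    | succ k ih =>
      have h1 : γ1 * ‖a (k + 1) - astar‖ ≤ ‖L1 (a (k + 1)) - L1 astar‖ :=
        hcoer _ _
      have h2 : L1 (a (k + 1)) - L1 astar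
          = (L1 (a k) - L2 (a k)) - (L1 astar - L2 astar) := by
        rw [hrec k, hstar]; abel
      have h3 : γ1 * ‖a (k + 1) - astar‖ ≤ γ2 * Δt * ‖a k - astar‖ := by
        calc γ1 * ‖a (k + 1) - astar‖ ≤ ‖L1 (a (k + 1)) - L1 astar‖ := h1
        _ = ‖(L1 (a k) - L2 (a k)) - (L1 astar - L2 astar)‖ := by rw [h2]
        _ ≤ γ2 * Δt * ‖a k - astar‖ := hlip _ _
      have h4 : ‖a (k + 1) - astar‖ ≤ (γ2 * Δt / γ1) * ‖a k - astar‖ := by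
        rw [div_mul_eq_mul_div, le_div_iff₀ hγ1]
        linarith [h3]
      calc ‖a (k + 1) - astar‖ ≤ (γ2 * Δt / γ1) * ‖a k - astar‖ := h4
      _ ≤ (γ2 * Δt / γ1) * ((γ2 * Δt / γ1) ^ k * C) := by
          apply mul_le_mul_of_nonneg_left ih
          positivity
      _ = (γ2 * Δt / γ1) ^ (k + 1) * C := by ring
  have hK := key K
  have htri : ‖a K - aex‖ ≤ ‖a K - astar‖ + ‖astar - aex‖ := by
    have := norm_sub_le_norm_sub_add_norm_sub (a K) astar aex
    simpa using this
  have heq : (γ2 * Δt / γ1) ^ K * C = C * ((γ2 / γ1) ^ K * Δt ^ K) := by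
    rw [div_pow, ← mul_pow]
    field_simp
    ring_nf
    rw [mul_assoc, ← mul_pow γ1, mul_inv_cancel₀ hγ1.ne', one_pow, mul_one]
  calc ‖a K - aex‖ ≤ ‖a K - astar‖ + ‖astar - aex‖ := htri
  _ ≤ (γ2 * Δt / γ1) ^ K * C + C * Δt ^ (Mn + 1) := add_le_add hK hclose
  _ = C * (Δt ^ (Mn + 1) + (γ2 / γ1) ^ K * Δt ^ K) := by rw [heq]; ring
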